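/- Let Y be a symmetric n×n real matrix, x ∈ {±1}^n, and let D be the diagonal matrix with entries D_ii = Σ_{j=1}^n Y_ij x_i x_j. If the second smallest eigenvalue of D − Y is strictly positive, then X = x x^T is the unique optimal solution of the SDP: maximize Tr(YX) subject to X_ii = 1 and X ⪰ 0. -/

import Mathlib

open Matrix

/-- The `k`-th smallest eigenvalue of a Hermitian matrix (sorted in increasing order). -/
noncomputable def eigSorted {n : ℕ} {M : Matrix (Fin n) (Fin n) ℝ}
    (hM : M.IsHermitian) : Fin n → ℝ :=
  hM.eigenvalues ∘ Tuple.sort hM.eigenvalues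

lemma trace_helper {n : ℕ} (H X : Matrix (Fin n) (Fin n) ℝ) (hH : H.PosSemidef)
    (hX : X.PosSemidef) :
    0 ≤ (H * X).trace ∧ ((H * X).trace = 0 → H * X = 0) := by
  obtain ⟨B, rfl⟩ : ∃ B : Matrix (Fin n) (Fin n) ℝ, X = Bᴴ * B := by
    open scoped MatrixOrder in exact CStarAlgebra.nonneg_iff_eq_star_mul_self.mp hX.nonneg
  have h1 : (H * (Bᴴ * B)).trace = ∑ j, B j ⬝ᵥ (H *ᵥ B j) := by
    rw [← mul_assoc, trace_mul_comm]
    simp only [trace, diag, mul_apply, dotProduct, mulVec, conjTranspose_apply, star_trivial,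
      Finset.mul_sum, Finset.sum_mul]
  have hterm : ∀ j, 0 ≤ B j ⬝ᵥ (H *ᵥ B j) := fun j => by
    simpa using hH.dotProduct_mulVec_nonneg (B j)
  constructor
  · rw [h1]; exact Finset.sum_nonneg fun j _ => hterm j
  · intro h0
    rw [h1] at h0
    have hz : ∀ j ∈ Finset.univ, B j ⬝ᵥ (H *ᵥ B j) = 0 :=
      (Finset.sum_eq_zero_iff_of_nonneg fun j _ => hterm j).mp h0
    have hcol : ∀ j, H *ᵥ B j = 0 := fun j =>
      (hH.dotProduct_mulVec_zero_iff (B j)).mp (by simpa using hz j (Finset.mem_univ j))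
    have hHB : H * Bᴴ = 0 := by
      ext i j
      have := congrFun (hcol j) i
      simpa [mul_apply, mulVec, dotProduct, conjTranspose_apply] using this
    rw [← mul_assoc, hHB, zero_mul]

lemma ker_helper {n : ℕ} {H : Matrix (Fin n) (Fin n) ℝ} (hH : H.IsHermitian) (i₀ : Fin n)
    (hpos : ∀ i, i ≠ i₀ → hH.eigenvalues i ≠ 0) (v : Fin n → ℝ) (hv : H *ᵥ v = 0) :
    v = ((star (hH.eigenvectorUnitary : Matrix (Fin n) (Fin n) ℝ) *ᵥ v) i₀) •
      (fun i => (hH.eigenvectorUnitary : Matrix (Fin n) (Fin n) ℝ) i i₀) := by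
  set U := (hH.eigenvectorUnitary : Matrix (Fin n) (Fin n) ℝ) with hU
  have hUU : U * star U = 1 := mem_unitaryGroup_iff.mp hH.eigenvectorUnitary.2
  have hdiag : star U * H = diagonal hH.eigenvalues * star U := by
    have h : star U * H * U = diagonal (RCLike.ofReal ∘ hH.eigenvalues) := by
      simpa only [Unitary.conjStarAlgAut_star_apply] using hH.conjStarAlgAut_star_eigenvectorUnitary
    rw [RCLike.ofReal_real_eq_id] at h
    calc star U * H = star U * H * (U * star U) := by rw [hUU, mul_one]
    _ = (star U * H * U) * star U := by rw [mul_assoc, mul_assoc, mul_assoc]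
    _ = diagonal hH.eigenvalues * star U := by
        rw [show star U * H * U = diagonal (id ∘ hH.eigenvalues) from h]; rfl
  set w := star U *ᵥ v with hw
  have hw0 : ∀ i, hH.eigenvalues i * w i = 0 := by
    intro i
    have h2 : (star U * H) *ᵥ v = 0 := by rw [← mulVec_mulVec, hv, mulVec_zero]
    rw [hdiag, ← mulVec_mulVec] at h2
    have := congrFun h2 i
    simpa [mulVec_diagonal] using this
  have hwz : ∀ i, i ≠ i₀ → w i = 0 := fun i hi =>
    (mul_eq_zero.mp (hw0 i)).resolve_left (hpos i hi)
  have hwsingle : w = Pi.single i₀ (w i₀) := by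
    funext i
    by_cases h : i = i₀
    · subst h; simp
    · simp [Pi.single_apply, h, hwz i h]
  calc v = (U * star U) *ᵥ v := by rw [hUU, one_mulVec]
  _ = U *ᵥ w := by rw [← mulVec_mulVec]
  _ = U *ᵥ Pi.single i₀ (w i₀) := by rw [← hwsingle]
  _ = _ := by rw [mulVec_single]; funext i; simp [mul_comm]

/-- With the explicit dual certificate `D_{ii} = ∑_j Y_{ij} x_i x_j`:
if `λ₂(D - Y) > 0` then `X = xxᵀ` is the unique optimal solution of the SDP
`max Tr(YX) s.t. X_{ii} = 1, X ⪰ 0`. -/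
theorem stmt1 {n : ℕ} (hn : 2 ≤ n) (Y : Matrix (Fin n) (Fin n) ℝ)
    (hY : Y.IsHermitian) (x : Fin n → ℝ) (hx : ∀ i, x i = 1 ∨ x i = -1)
    (D : Matrix (Fin n) (Fin n) ℝ)
    (hD : D = Matrix.diagonal fun i => ∑ j, Y i j * x i * x j)
    (hH : (D - Y).IsHermitian)
    (hgap : 0 < eigSorted hH ⟨1, by omega⟩) :
    (∀ X : Matrix (Fin n) (Fin n) ℝ, (∀ i, X i i = 1) → X.PosSemidef →
      (Y * X).trace ≤ (Y * vecMulVec x x).trace) ∧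
    (∀ X : Matrix (Fin n) (Fin n) ℝ, (∀ i, X i i = 1) → X.PosSemidef →
      (Y * X).trace = (Y * vecMulVec x x).trace → X = vecMulVec x x) := by
  have hx2 : ∀ i, x i * x i = 1 := fun i => by rcases hx i with h | h <;> rw [h] <;> norm_num
  -- the certificate kills x
  have hHx : (D - Y) *ᵥ x = 0 := by
    funext i
    rw [sub_mulVec, hD]
    have h1 : diagonal (fun i => ∑ j, Y i j * x i * x j) *ᵥ x = fun i =>
        (∑ j, Y i j * x i * x j) * x i := by
      funext i; rw [mulVec_diagonal]
    rw [h1]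
    have h2 : (∑ j, Y i j * x i * x j) * x i = ∑ j, Y i j * x j := by
      rw [Finset.sum_mul]
      refine Finset.sum_congr rfl fun j _ => ?_
      calc Y i j * x i * x j * x i = Y i j * x j * (x i * x i) := by ring
      _ = Y i j * x j := by rw [hx2 i, mul_one]
    simp only [Pi.sub_apply, Pi.zero_apply, h2, mulVec, dotProduct, sub_self]
  have hx0ne : x ≠ 0 := by
    intro h
    rcases hx ⟨0, by omega⟩ with h1 | h1 <;> rw [h] at h1 <;> norm_num at h1
  -- zero is an eigenvalue
  have hdet : ∃ i, hH.eigenvalues i = 0 := by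
    by_contra hc
    push_neg at hc
    have hdet : IsUnit (D - Y).det := by
      rw [hH.det_eq_prod_eigenvalues]
      exact isUnit_iff_ne_zero.mpr (Finset.prod_ne_zero_iff.mpr fun i _ => by simpa using hc i)
    apply hx0ne
    calc x = ((D - Y)⁻¹ * (D - Y)) *ᵥ x := by rw [nonsing_inv_mul _ hdet, one_mulVec]
    _ = (D - Y)⁻¹ *ᵥ ((D - Y) *ᵥ x) := by rw [mulVec_mulVec]
    _ = 0 := by rw [hHx, mulVec_zero]
  set i₀ := Tuple.sort hH.eigenvalues ⟨0, by omega⟩ with hi₀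
  -- all other eigenvalues are positive
  have hpos : ∀ i, i ≠ i₀ → 0 < hH.eigenvalues i := by
    intro i hi
    set σ := Tuple.sort hH.eigenvalues with hσ
    have hk : σ.symm i ≠ ⟨0, by omega⟩ := by
      intro h
      apply hi
      rw [hi₀, ← h, Equiv.apply_symm_apply]
    have h1le : (⟨1, by omega⟩ : Fin n) ≤ σ.symm i := by
      have hne : (σ.symm i).1 ≠ 0 := fun h => hk (Fin.ext h)
      exact Fin.mk_le_of_le_val (by omega)
    have hmono := Tuple.monotone_sort hH.eigenvalues h1le
    have heq : hH.eigenvalues i = (hH.eigenvalues ∘ σ) (σ.symm i) := by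
      simp [Function.comp, Equiv.apply_symm_apply]
    rw [heq]
    calc (0:ℝ) < (hH.eigenvalues ∘ σ) ⟨1, by omega⟩ := hgap
    _ ≤ _ := hmono
  have hzero : hH.eigenvalues i₀ = 0 := by
    obtain ⟨i, hi⟩ := hdet
    by_cases h : i = i₀
    · rw [← h]; exact hi
    · exact absurd hi (hpos i h).ne'
  have hnn : ∀ i, 0 ≤ hH.eigenvalues i := by
    intro i
    by_cases h : i = i₀
    · rw [h, hzero]
    · exact (hpos i h).le
  have hpsd : (D - Y).PosSemidef := hH.posSemidef_iff_eigenvalues_nonneg.mpr fun i => hnn i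
  -- kernel is spanned by x
  have hker : ∀ v : Fin n → ℝ, (D - Y) *ᵥ v = 0 → ∃ t : ℝ, v = t • x := by
    intro v hv
    have hpos' : ∀ i, i ≠ i₀ → hH.eigenvalues i ≠ 0 := fun i hi => (hpos i hi).ne'
    have h1 := ker_helper hH i₀ hpos' v hv
    have h2 := ker_helper hH i₀ hpos' x hHx
    set c := (star (hH.eigenvectorUnitary : Matrix (Fin n) (Fin n) ℝ) *ᵥ x) i₀ with hc
    have hcne : c ≠ 0 := by
      intro h
      rw [h, zero_smul] at h2
      exact hx0ne h2
    refine ⟨(star (hH.eigenvectorUnitary : Matrix (Fin n) (Fin n) ℝ) *ᵥ v) i₀ / c, ?_⟩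
    rw [h2, smul_smul, div_mul_cancel₀ _ hcne]
    exact h1
  -- trace decomposition
  have key : ∀ X : Matrix (Fin n) (Fin n) ℝ, (∀ i, X i i = 1) →
      (Y * X).trace = (∑ i, ∑ j, Y i j * x i * x j) - ((D - Y) * X).trace := by
    intro X hXd
    have h2 : (D * X).trace = ∑ i, ∑ j, Y i j * x i * x j := by
      rw [hD]
      simp [trace, diag, diagonal_mul, hXd]
    rw [sub_mul, trace_sub, h2]
    ring
  have hXfeas : ∀ i, (vecMulVec x x) i i = 1 := fun i => by
    rw [vecMulVec_apply, hx2 i]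
  have hHxx : (D - Y) * vecMulVec x x = 0 := by
    ext i j
    have h1 := congrFun hHx i
    simp only [mulVec, dotProduct, Pi.zero_apply] at h1
    simp only [mul_apply, vecMulVec_apply, Matrix.zero_apply]
    calc ∑ k, (D - Y) i k * (x k * x j) = (∑ k, (D - Y) i k * x k) * x j := by
          rw [Finset.sum_mul]; exact Finset.sum_congr rfl fun k _ => by ring
    _ = 0 := by rw [h1, zero_mul]
  have hRHS : (Y * vecMulVec x x).trace = ∑ i, ∑ j, Y i j * x i * x j := by
    rw [key _ hXfeas, hHxx, trace_zero, sub_zero]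
  constructor
  · intro X hXd hXpsd
    rw [key X hXd, hRHS]
    have := (trace_helper _ _ hpsd hXpsd).1
    linarith
  · intro X hXd hXpsd heq
    rw [key X hXd, hRHS] at heq
    have htr : ((D - Y) * X).trace = 0 := by linarith
    have hHX := (trace_helper _ _ hpsd hXpsd).2 htr
    have hcols : ∀ j, ∃ t : ℝ, (fun i => X i j) = t • x := by
      intro j
      apply hker
      funext i
      have := congrFun (congrFun hHX i) j
      simpa [mul_apply, mulVec, dotProduct] using this
    ext i j
    obtain ⟨t, ht⟩ := hcols j
    have hXij : X i j = t * x i := by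
      have := congrFun ht i
      simpa using this
    have hXjj : t * x j = 1 := by
      have h1 := congrFun ht j
      simp only [Pi.smul_apply, smul_eq_mul] at h1
      rw [← h1, hXd j]
    have htval : t = x j := by
      rcases hx j with h | h <;> rw [h] at hXjj ⊢ <;> linarith
    rw [vecMulVec_apply, hXij, htval]
    ring
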